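/- If P[0..e] is the leftmost MEM of P with respect to T and e < |P| - 1, then there exists a MEM of P containing position e + 1, and every MEM other than the leftmost one contains position e + 1 or lies entirely to its right; moreover the second MEM from the left includes position e + 1. -/
import Mathlib


open List

variable {α : Type*}

/-- `substr P i j` is the substring `P[i..j]` (inclusive indices). -/
def substr (P : List α) (i j : ℕ) : List α := (P.drop i).take (j - i + 1)

/-- `IsMEM T P i j` : `P[i..j]` is a maximal exact match of `P` w.r.t. `T`:
it occurs in `T`, and it can be extended neither to the left nor to the right
within `P` while still occurring in `T`. -/
def IsMEM (T P : List α) (i j : ℕ) : Prop :=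
  i ≤ j ∧ j < P.length ∧ substr P i j <:+: T ∧
  (i = 0 ∨ ¬ substr P (i - 1) j <:+: T) ∧
  (j = P.length - 1 ∨ ¬ substr P i (j + 1) <:+: T)

/-- All length-`k` substrings (`k`-mers) of `S` pass the filter `F`. -/
def kmersPass (F : List α → Bool) (k : ℕ) (S : List α) : Prop :=
  ∀ w : List α, w.length = k → w <:+: S → F w = true

/-- `IsPseudoMEM F k L P i j` : `P[i..j]` is a maximal substring of `P` of length
at least `L` all of whose `k`-mers pass the filter `F`. -/
def IsPseudoMEM (F : List α → Bool) (k L : ℕ) (P : List α) (i j : ℕ) : Prop :=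
  i ≤ j ∧ j < P.length ∧ L ≤ j - i + 1 ∧ kmersPass F k (substr P i j) ∧
  (i = 0 ∨ ¬ kmersPass F k (substr P (i - 1) j)) ∧
  (j = P.length - 1 ∨ ¬ kmersPass F k (substr P i (j + 1)))

/-- `F` has no false negatives for the `k`-mers of `T`. -/
def NoFalseNeg (F : List α → Bool) (k : ℕ) (T : List α) : Prop :=
  ∀ w : List α, w.length = k → w <:+: T → F w = true

lemma substr_eq (P : List α) {i i' j j' : ℕ} (h1 : i ≤ i') (h2 : i' ≤ j') (h3 : j' ≤ j) :
    substr P i' j' = ((substr P i j).drop (i' - i)).take (j' - i' + 1) := by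
  unfold substr
  rw [List.drop_take, List.drop_drop, List.take_take]
  have : i + (i' - i) = i' := by omega
  rw [this]
  congr 1
  omega

lemma substr_infix (P : List α) {i i' j j' : ℕ} (h1 : i ≤ i') (h2 : i' ≤ j') (h3 : j' ≤ j) :
    substr P i' j' <:+: substr P i j := by
  rw [substr_eq P h1 h2 h3]
  exact ((List.take_prefix _ _).isInfix).trans ((List.drop_suffix _ _).isInfix)

lemma substr_single (P : List α) {n : ℕ} (h : n < P.length) :
    substr P n n = [P[n]] := by
  unfold substr
  have h1 : n - n + 1 = 1 := by omega
  rw [h1]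
  exact List.take_one_drop_eq_of_lt_length h

/-- if `P[0..e]` is the leftmost MEM and `e < |P| - 1`, then some
MEM contains position `e + 1`; every MEM other than the leftmost contains
position `e + 1` or lies entirely to its right; and the second MEM from the
left includes position `e + 1`. -/
theorem second_mem_contains_next_position (T P : List α)
    (hchars : ∀ a ∈ P, [a] <:+: T)
    (e : ℕ) (hleft : IsMEM T P 0 e) (he : e < P.length - 1) :
    (∃ i j, IsMEM T P i j ∧ i ≤ e + 1 ∧ e + 1 ≤ j) ∧
    (∀ i j, IsMEM T P i j → ¬ (i = 0 ∧ j = e) →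
      (i ≤ e + 1 ∧ e + 1 ≤ j) ∨ e + 1 < i) ∧
    (∀ i j, IsMEM T P i j → 0 < i →
      (∀ i' j', IsMEM T P i' j' → 0 < i' → i ≤ i') →
      i ≤ e + 1 ∧ e + 1 ≤ j) := by
  classical
  obtain ⟨-, heP, hinf0e, -, hrmax⟩ := hleft
  have he1 : e + 1 < P.length := by omega
  have hnotext : ¬ substr P 0 (e + 1) <:+: T := by
    rcases hrmax with h | h
    · omega
    · exact h
  -- no MEM can start at 0 with j ≠ e
  have hzero : ∀ j, IsMEM T P 0 j → j = e := by
    intro j hm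
    obtain ⟨-, hjP, hinf, -, hrm⟩ := hm
    by_contra hne
    rcases lt_or_gt_of_ne hne with hlt | hgt
    · rcases hrm with h | h
      · omega
      · exact h (((substr_infix P (le_refl 0) (by omega) (by omega)).trans hinf0e))
    · exact hnotext ((substr_infix P (le_refl 0) (by omega) (by omega)).trans hinf)
  -- existence of a MEM containing e+1
  have hsingle : substr P (e+1) (e+1) <:+: T := by
    rw [substr_single P he1]
    exact hchars _ (List.getElem_mem he1)
  set Q : ℕ → Prop := fun j => e + 1 ≤ j ∧ j < P.length ∧ substr P (e+1) j <:+: T with hQ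
  have hQe : Q (e+1) := ⟨le_refl _, he1, hsingle⟩
  set j₀ := Nat.findGreatest Q (P.length - 1) with hj₀def
  have hQj₀ : Q j₀ := by
    have h0 : j₀ ≠ 0 := by
      have : e + 1 ≤ Nat.findGreatest Q (P.length - 1) :=
        Nat.le_findGreatest (n := P.length - 1) (by omega) hQe
      omega
    exact Nat.findGreatest_of_ne_zero rfl h0
  have hj₀ge : e + 1 ≤ j₀ := hQj₀.1
  have hj₀lt : j₀ < P.length := hQj₀.2.1
  have hj₀max : ∀ k, j₀ < k → k < P.length → ¬ substr P (e+1) k <:+: T := by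
    intro k hk hkP hcontra
    exact Nat.findGreatest_is_greatest hk (by omega) ⟨by omega, hkP, hcontra⟩
  set R : ℕ → Prop := fun i => i ≤ e + 1 ∧ substr P i j₀ <:+: T with hR
  have hRe : R (e+1) := ⟨le_refl _, hQj₀.2.2⟩
  have hRex : ∃ i, R i := ⟨e+1, hRe⟩
  set i₀ := Nat.find hRex with hi₀def
  have hRi₀ : R i₀ := Nat.find_spec hRex
  have hi₀le : i₀ ≤ e + 1 := hRi₀.1
  have hmem₀ : IsMEM T P i₀ j₀ := by
    refine ⟨by omega, hj₀lt, hRi₀.2, ?_, ?_⟩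
    · rcases Nat.eq_zero_or_pos i₀ with h | h
      · exact Or.inl h
      · refine Or.inr fun hcontra => ?_
        have : R (i₀ - 1) := ⟨by omega, hcontra⟩
        exact Nat.find_min hRex (by omega) this
    · rcases Nat.lt_or_ge (j₀ + 1) P.length with h | h
      · refine Or.inr fun hcontra => ?_
        exact hj₀max (j₀+1) (by omega) h
          ((substr_infix P (by omega) (by omega) (le_refl _)).trans hcontra)
      · exact Or.inl (by omega)
  refine ⟨⟨i₀, j₀, hmem₀, hi₀le, hj₀ge⟩, ?_, ?_⟩
  · -- part 2
    intro i j hmem hne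
    obtain ⟨hij, hjP, hinf, hlm, hrm⟩ := hmem
    rcases Nat.lt_or_ge (e+1) i with h | h
    · exact Or.inr h
    refine Or.inl ⟨h, ?_⟩
    by_contra hje
    have hje' : j ≤ e := by omega
    rcases hlm with h0 | hl
    · subst h0
      have hjlt : j < e := by
        rcases Nat.lt_or_ge j e with h' | h'
        · exact h'
        · exact absurd ⟨rfl, by omega⟩ hne
      rcases hrm with h' | h'
      · omega
      · exact h' ((substr_infix P (le_refl 0) (by omega) (by omega)).trans hinf0e)
    · exact hl ((substr_infix P (by omega) (by omega) hje').trans hinf0e)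
  · -- part 3
    intro i j hmem hi hmin
    have hne : ¬ (i = 0 ∧ j = e) := fun ⟨h0, _⟩ => by omega
    have h2 : (i ≤ e + 1 ∧ e + 1 ≤ j) ∨ e + 1 < i := by
      rcases Nat.lt_or_ge (e+1) i with h | h
      · exact Or.inr h
      · -- reuse part-2 argument inline
        obtain ⟨hij, hjP, hinf, hlm, hrm⟩ := hmem
        refine Or.inl ⟨h, ?_⟩
        by_contra hje
        have hje' : j ≤ e := by omega
        rcases hlm with h0 | hl
        · omega
        · exact hl ((substr_infix P (by omega) (by omega) hje').trans hinf0e)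
    rcases h2 with h2 | h2
    · exact h2
    · exfalso
      have hi₀pos : 0 < i₀ := by
        rcases Nat.eq_zero_or_pos i₀ with h0 | h0
        · exfalso
          have := hzero j₀ (h0 ▸ hmem₀)
          omega
        · exact h0
      have := hmin i₀ j₀ hmem₀ hi₀pos
      omega
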